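/- Let A be an n×n irreducible nonnegative real matrix with period p > 1. Then for every integer k with 0 ≤ k ≤ 2p−1, there exists a real matrix B with |B| = A and sp(B) = e^{iπk/p}·sp(A). -/

import Mathlib

open Matrix

/-- The spectrum of a real square matrix: the multiset of complex roots of its
characteristic polynomial (eigenvalues with multiplicity). -/
noncomputable def spec {ι : Type*} [Fintype ι] [DecidableEq ι] (M : Matrix ι ι ℝ) : Multiset ℂ :=
  (M.map Complex.ofReal).charpoly.roots

/-- The spectral radius: the maximum of the moduli of the complex eigenvalues. -/
noncomputable def specRadius {ι : Type*} [Fintype ι] [DecidableEq ι] (M : Matrix ι ι ℝ) : ℝ :=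
  sSup ((fun z : ℂ => ‖z‖) '' {z | z ∈ spec M})

/-- Entrywise absolute value of a real matrix. -/
def matAbs {ι : Type*} (M : Matrix ι ι ℝ) : Matrix ι ι ℝ := fun i j => |M i j|

/-- A walk of length `k` from `i` to `j` in the digraph of `A`
(arcs are the pairs with nonzero entry). -/
def HasWalk {ι : Type*} (A : Matrix ι ι ℝ) (i j : ι) (k : ℕ) : Prop :=
  ∃ f : ℕ → ι, f 0 = i ∧ f k = j ∧ ∀ t < k, A (f t) (f (t + 1)) ≠ 0

/-- `A` is irreducible: its digraph is strongly connected. -/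
def MatIrreducible {ι : Type*} (A : Matrix ι ι ℝ) : Prop :=
  ∀ i j : ι, ∃ k, HasWalk A i j k

/-- `p` is the period of `A`: the gcd of the lengths of the closed walks of its digraph. -/
def IsPeriod {ι : Type*} (A : Matrix ι ι ℝ) (p : ℕ) : Prop :=
  (∀ k, 0 < k → (∃ i, HasWalk A i i k) → p ∣ k) ∧
  ∀ q : ℕ, (∀ k, 0 < k → (∃ i, HasWalk A i i k) → q ∣ k) → q ∣ p

/-- `B'` is `{-1,1}`-diagonally similar to `B`:
`B' = Λ⁻¹ * B * Λ` for a diagonal matrix `Λ` with diagonal entries in `{-1,1}`. -/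
def DiagSignSimilar {ι : Type*} [Fintype ι] [DecidableEq ι] (B B' : Matrix ι ι ℝ) : Prop :=
  ∃ d : ι → ℝ, (∀ i, d i = 1 ∨ d i = -1) ∧
    B' = (Matrix.diagonal d)⁻¹ * B * Matrix.diagonal d

section Aux
open Polynomial

lemma eval_charpoly' {n : ℕ} (M : Matrix (Fin n) (Fin n) ℂ) (x : ℂ) :
    M.charpoly.eval x = (x • (1 : Matrix (Fin n) (Fin n) ℂ) - M).det := by
  rw [Matrix.charpoly, ← Polynomial.coe_evalRingHom, RingHom.map_det]
  congr 1
  ext i j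
  by_cases h : i = j
  · subst h; simp [charmatrix_apply_eq, Matrix.one_apply]
  · simp [charmatrix_apply_ne _ _ _ h, Matrix.one_apply_ne h]

lemma roots_conj_smul {n : ℕ} (M N : Matrix (Fin n) (Fin n) ℂ) (d : Fin n → ℂ)
    (hd : ∀ i, d i ≠ 0) (z : ℂ) (hz : z ≠ 0)
    (hN : Matrix.diagonal d * (z • M) = N * Matrix.diagonal d) :
    N.charpoly.roots = M.charpoly.roots.map (fun r => z * r) := by
  have hdet : (Matrix.diagonal d).det ≠ 0 := by
    rw [Matrix.det_diagonal]
    exact Finset.prod_ne_zero_iff.2 fun i _ => hd i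
  set s := M.charpoly.roots with hs
  have hsplit : M.charpoly.Splits := IsAlgClosed.splits _
  have hcard : Multiset.card s = n := by
    rw [hs, (Polynomial.splits_iff_card_roots).1 hsplit, Matrix.charpoly_natDegree_eq_dim,
      Fintype.card_fin]
  have hfact : M.charpoly = (s.map fun a => X - C a).prod :=
    hsplit.eq_prod_roots_of_monic M.charpoly_monic
  have key : N.charpoly = ((s.map fun r => z * r).map fun a => X - C a).prod := by
    apply Polynomial.funext
    intro x
    have e1 : N.charpoly.eval x * (Matrix.diagonal d).det
        = ((x / z) • (1 : Matrix (Fin n) (Fin n) ℂ) - M).det * z ^ n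
          * (Matrix.diagonal d).det := by
      rw [eval_charpoly', ← Matrix.det_mul, Matrix.sub_mul, ← hN]
      have : x • (1 : Matrix (Fin n) (Fin n) ℂ) * Matrix.diagonal d
          - Matrix.diagonal d * (z • M)
          = Matrix.diagonal d * (z • ((x / z) • (1 : Matrix (Fin n) (Fin n) ℂ) - M)) := by
        rw [smul_sub, smul_smul, mul_div_cancel₀ _ hz, Matrix.mul_sub]
        congr 1
        rw [Matrix.smul_mul, Matrix.mul_smul, Matrix.mul_one, Matrix.one_mul]
      rw [this, Matrix.mul_smul, Matrix.det_smul, Matrix.det_mul]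
      rw [Fintype.card_fin]
      ring
    have e2 : N.charpoly.eval x
        = ((x / z) • (1 : Matrix (Fin n) (Fin n) ℂ) - M).det * z ^ n :=
      mul_right_cancel₀ hdet e1
    rw [e2]
    have e3 : ((x / z) • (1 : Matrix (Fin n) (Fin n) ℂ) - M).det
        = M.charpoly.eval (x / z) := (eval_charpoly' M (x / z)).symm
    rw [e3, hfact]
    rw [Polynomial.eval_multiset_prod, Polynomial.eval_multiset_prod]
    simp only [Multiset.map_map, Function.comp, Polynomial.eval_sub, Polynomial.eval_X,
      Polynomial.eval_C]
    have : (s.map fun a => x - z * a) = s.map fun a => z * (x / z - a) := by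
      apply Multiset.map_congr rfl
      intro a _
      field_simp
    rw [this, ← hcard]
    calc (s.map fun a => x / z - a).prod * z ^ Multiset.card s
        = (s.map fun _ => z).prod * (s.map fun a => x / z - a).prod := by
          rw [Multiset.map_const', Multiset.prod_replicate, mul_comm]
      _ = (s.map fun a => z * (x / z - a)).prod := by rw [← Multiset.prod_map_mul]
  rw [key, Polynomial.roots_multiset_prod_X_sub_C]

lemma hasWalk_trans {ι : Type*} {A : Matrix ι ι ℝ} {i j l : ι} {a b : ℕ}
    (h1 : HasWalk A i j a) (h2 : HasWalk A j l b) : HasWalk A i l (a + b) := by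
  obtain ⟨f, hf0, hfa, hf⟩ := h1
  obtain ⟨g, hg0, hgb, hg⟩ := h2
  refine ⟨fun t => if t < a then f t else g (t - a), ?_, ?_, ?_⟩
  · by_cases h : 0 < a
    · simpa [h]
    · have : a = 0 := by omega
      subst this
      simp [hg0, ← hf0, ← hfa]
  · have : ¬ (a + b < a) := by omega
    simp [this, hgb]
  · intro t ht
    by_cases h1' : t + 1 < a
    · have h2' : t < a := by omega
      simp only [h1', h2', if_true]
      exact hf t h2'
    · by_cases h3 : t < a
      · have : t + 1 = a := by omega
        simp only [h1', h3, if_true, if_false]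
        rw [this, show a - a = 0 from by omega, hg0, ← hfa, ← this]
        exact hf t h3
      · simp only [h1', h3, if_false]
        rw [show t + 1 - a = (t - a) + 1 from by omega]
        exact hg (t - a) (by omega)

lemma hasWalk_edge {ι : Type*} {A : Matrix ι ι ℝ} {i j : ι}
    (h : A i j ≠ 0) : HasWalk A i j 1 :=
  ⟨fun t => if t = 0 then i else j, by simp, by simp, by
    intro t ht
    interval_cases t
    simpa⟩

lemma key_lemma {n p : ℕ} (hp1 : 1 < p) (A : Matrix (Fin n) (Fin n) ℝ)
    (c : Fin n → ZMod p) (hedge : ∀ i j, A i j ≠ 0 → c j = c i + 1)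
    (z : ℂ) (ε : ℝ) (hz : z ≠ 0) (hzp : z ^ p = (ε : ℂ)) :
    spec (fun i j => (if (c i).val + 1 = p then ε else 1) * A i j)
      = (spec A).map (fun r => z * r) := by
  haveI : NeZero p := ⟨by omega⟩
  haveI : Fact (1 < p) := ⟨hp1⟩
  apply roots_conj_smul _ _ (fun i => z ^ (c i).val) (fun i => pow_ne_zero _ hz) z hz
  ext i j
  rw [Matrix.diagonal_mul, Matrix.mul_diagonal]
  simp only [Matrix.smul_apply, Matrix.map_apply, smul_eq_mul]
  change z ^ (c i).val * (z * (A i j : ℂ)) = (((if (c i).val + 1 = p then ε else 1) * A i j : ℝ) : ℂ) * z ^ (c j).val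
  by_cases h : A i j = 0
  · simp [h]
  · have hcj := hedge i j h
    have hval : (c j).val = ((c i).val + 1) % p := by
      rw [hcj, ZMod.val_add, ZMod.val_one]
    by_cases hpe : (c i).val + 1 = p
    · have hj0 : (c j).val = 0 := by rw [hval, hpe, Nat.mod_self]
      rw [hj0, if_pos hpe, pow_zero, mul_one, ← mul_assoc, ← pow_succ, hpe, hzp]
      push_cast
      ring
    · have hlt : (c i).val + 1 < p := by
        have := ZMod.val_lt (c i)
        omega
      have hj : (c j).val = (c i).val + 1 := by rw [hval, Nat.mod_eq_of_lt hlt]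
      rw [hj, if_neg hpe, pow_succ]
      push_cast
      ring

end Aux

theorem stmt_11 {n : ℕ} (A : Matrix (Fin n) (Fin n) ℝ)
    (hnn : ∀ i j, 0 ≤ A i j) (hirr : MatIrreducible A)
    (p : ℕ) (hp : IsPeriod A p) (hp1 : 1 < p)
    (k : ℕ) (hk : k ≤ 2 * p - 1) :
    ∃ B : Matrix (Fin n) (Fin n) ℝ, matAbs B = A ∧
      spec B = (spec A).map (fun z => Complex.exp (Complex.I * Real.pi * k / p) * z) := by
  classical
  haveI : NeZero p := ⟨by omega⟩
  have hAbsA : matAbs A = A := by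
    funext i j
    exact abs_of_nonneg (hnn i j)
  rcases Nat.eq_zero_or_pos n with hn | hn
  · refine ⟨A, hAbsA, ?_⟩
    haveI : IsEmpty (Fin n) := by rw [hn]; exact Fin.isEmpty'
    have h1 : (A.map Complex.ofReal).charpoly = 1 := Matrix.det_isEmpty
    simp [spec, h1]
  -- the class function
  set v0 : Fin n := ⟨0, hn⟩ with hv0
  have hlen : ∀ i, HasWalk A v0 i (hirr v0 i).choose := fun i => (hirr v0 i).choose_spec
  set c : Fin n → ZMod p := fun i => ((hirr v0 i).choose : ZMod p) with hc
  have hclosed : ∀ (i : Fin n) (m : ℕ), HasWalk A i i m → (m : ZMod p) = 0 := by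
    intro i m hm
    rcases Nat.eq_zero_or_pos m with h | h
    · simp [h]
    · exact (ZMod.natCast_eq_zero_iff m p).2 (hp.1 m h ⟨i, hm⟩)
  have hwalkcast : ∀ (j : Fin n) (a b : ℕ), HasWalk A v0 j a → HasWalk A v0 j b →
      (a : ZMod p) = (b : ZMod p) := by
    intro j a b ha hb
    obtain ⟨m, hm⟩ := hirr j v0
    have h1 := hclosed v0 (a + m) (hasWalk_trans ha hm)
    have h2 := hclosed v0 (b + m) (hasWalk_trans hb hm)
    push_cast at h1 h2
    linear_combination h1 - h2
  have hedge : ∀ i j, A i j ≠ 0 → c j = c i + 1 := by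
    intro i j h
    have hw : HasWalk A v0 j ((hirr v0 i).choose + 1) :=
      hasWalk_trans (hlen i) (hasWalk_edge h)
    have := hwalkcast j (hirr v0 j).choose ((hirr v0 i).choose + 1) (hlen j) hw
    rw [hc]
    push_cast at this ⊢
    exact this
  -- the rotation factors
  set w : ℂ := Complex.exp (Complex.I * Real.pi / p) with hwdef
  have hw0 : w ≠ 0 := Complex.exp_ne_zero _
  have hpC : (p : ℂ) ≠ 0 := Nat.cast_ne_zero.2 (by omega)
  have hwp : w ^ p = -1 := by
    rw [hwdef, ← Complex.exp_nat_mul]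
    rw [show (p : ℂ) * (Complex.I * Real.pi / p) = Real.pi * Complex.I by field_simp]
    exact Complex.exp_pi_mul_I
  set u : ℂ := w ^ 2 with hudef
  have hu0 : u ≠ 0 := pow_ne_zero _ hw0
  have hup : u ^ p = 1 := by
    rw [hudef, ← pow_mul, mul_comm, pow_mul, hwp]
    norm_num
  -- rotation invariance of spec A
  have hrotA : spec A = (spec A).map (fun r => u * r) := by
    have h := key_lemma hp1 A c hedge u 1 hu0 (by rw [hup]; norm_num)
    have hB : (fun i j => (if (c i).val + 1 = p then (1:ℝ) else 1) * A i j) = A := by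
      funext i j
      split <;> ring
    rwa [hB] at h
  have hrot : ∀ m : ℕ, (spec A).map (fun r => u ^ m * r) = spec A := by
    intro m
    induction m with
    | zero => simp
    | succ m ih =>
      have hfun : (fun r : ℂ => u ^ (m + 1) * r)
          = (fun r : ℂ => u * r) ∘ (fun r : ℂ => u ^ m * r) := by
        funext r
        simp [pow_succ]
        ring
      rw [hfun, ← Multiset.map_map, ih, ← hrotA]
  have hwk : Complex.exp (Complex.I * Real.pi * k / p) = w ^ k := by
    rw [hwdef, ← Complex.exp_nat_mul]
    congr 1
    push_cast
    ring
  rcases Nat.even_or_odd k with ⟨m, hm⟩ | ⟨m, hm⟩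
  · refine ⟨A, hAbsA, ?_⟩
    have : w ^ k = u ^ m := by
      rw [hm, hudef, ← pow_mul, two_mul]
    rw [hwk, this]
    exact (hrot m).symm
  · set B : Matrix (Fin n) (Fin n) ℝ :=
      fun i j => (if (c i).val + 1 = p then (-1:ℝ) else 1) * A i j with hBdef
    refine ⟨B, ?_, ?_⟩
    · funext i j
      rw [hBdef]
      show |(if (c i).val + 1 = p then (-1:ℝ) else 1) * A i j| = A i j
      split
      · rw [abs_mul, abs_neg, abs_one, one_mul]
        exact abs_of_nonneg (hnn i j)
      · rw [one_mul]
        exact abs_of_nonneg (hnn i j)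
    · have hB := key_lemma hp1 A c hedge w (-1) hw0 (by rw [hwp]; norm_num)
      rw [hBdef]
      rw [hB]
      conv_lhs => rw [← hrot m]
      rw [Multiset.map_map]
      apply Multiset.map_congr rfl
      intro r _
      simp only [Function.comp_apply]
      rw [hwk, hm, pow_succ, hudef, ← pow_mul]
      ring
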